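/- Let m be a natural number and let H : EuclideanSpace ℝ (Fin m) × EuclideanSpace ℝ (Fin m) → ℝ be differentiable and even in the momentum variable: H(q, −p) = H(q, p) for all q, p. Write ∇_q H and ∇_p H for the partial gradients. Let ε ∈ ℝ and suppose (q', p') is an exact implicit midpoint step from (q, p): q' = q + ε • ∇_p H(q̄, p̄) and p' = p − ε • ∇_q H(q̄, p̄), where q̄ = (q + q')/2 and p̄ = (p + p')/2. Then (q, −p) is an exact implicit midpoint step of size ε from (q', −p'): q = q' + ε • ∇_p H((q' + q)/2, (−p' + (−p))/2) and −p = −p' − ε • ∇_q H((q' + q)/2, (−p' + (−p))/2). -/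

import Mathlib

lemma gradient_neg_of_even {E : Type*} [NormedAddCommGroup E] [InnerProductSpace ℝ E]
    [CompleteSpace E] (g : E → ℝ) (hg : Differentiable ℝ g)
    (he : ∀ x, g (-x) = g x) (x : E) :
    gradient g (-x) = - gradient g x := by
  have h1 : HasGradientAt g (gradient g x) x := (hg x).hasGradientAt
  have hf : HasFDerivAt g ((InnerProductSpace.toDual ℝ E) (gradient g x)) x :=
    hasGradientAt_iff_hasFDerivAt.mp h1
  have hneg : HasFDerivAt (fun y : E => -y) (-(ContinuousLinearMap.id ℝ E)) (-x) := by
    exact (hasFDerivAt_id (-x)).neg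
  have hcomp : HasFDerivAt (fun y : E => g (-y))
      (((InnerProductSpace.toDual ℝ E) (gradient g x)).comp (-(ContinuousLinearMap.id ℝ E)))
      (-x) := by
    have hf' : HasFDerivAt g ((InnerProductSpace.toDual ℝ E) (gradient g x)) (- -x) := by
      rwa [neg_neg]
    have := hf'.comp (-x) hneg
    exact this
  have hgx : HasFDerivAt g ((InnerProductSpace.toDual ℝ E) (- gradient g x)) (-x) := by
    have hfun : (fun y : E => g (-y)) = g := funext he
    have : ((InnerProductSpace.toDual ℝ E) (gradient g x)).comp
        (-(ContinuousLinearMap.id ℝ E)) = (InnerProductSpace.toDual ℝ E) (- gradient g x) := by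
      ext v; simp
    rw [hfun, this] at hcomp
    exact hcomp
  have : HasGradientAt g (- gradient g x) (-x) := hasGradientAt_iff_hasFDerivAt.mpr hgx
  exact this.gradient

/-- **Lemma A.1 of the paper** (momentum-negation symmetry / reversibility of the
implicit midpoint integrator). If `H` is even in the momentum and `(q', p')` is an exact
implicit midpoint step of size `ε` from `(q, p)`, then `(q, −p)` is an exact implicit
midpoint step of size `ε` from `(q', −p')`. -/
theorem implicit_midpoint_momentum_negation_symmetry
    (m : ℕ)
    (H : EuclideanSpace ℝ (Fin m) × EuclideanSpace ℝ (Fin m) → ℝ)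
    (hH : Differentiable ℝ H)
    (heven : ∀ q p : EuclideanSpace ℝ (Fin m), H (q, -p) = H (q, p))
    (gradq gradp :
      EuclideanSpace ℝ (Fin m) → EuclideanSpace ℝ (Fin m) → EuclideanSpace ℝ (Fin m))
    (hgradq : ∀ q p, gradq q p = gradient (fun q'' => H (q'', p)) q)
    (hgradp : ∀ q p, gradp q p = gradient (fun p'' => H (q, p'')) p)
    (ε : ℝ) (q p q' p' : EuclideanSpace ℝ (Fin m))
    (h1 : q' = q + ε • gradp ((2 : ℝ)⁻¹ • (q + q')) ((2 : ℝ)⁻¹ • (p + p')))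
    (h2 : p' = p - ε • gradq ((2 : ℝ)⁻¹ • (q + q')) ((2 : ℝ)⁻¹ • (p + p'))) :
    q = q' + ε • gradp ((2 : ℝ)⁻¹ • (q' + q)) ((2 : ℝ)⁻¹ • (-p' + -p)) ∧
    -p = -p' - ε • gradq ((2 : ℝ)⁻¹ • (q' + q)) ((2 : ℝ)⁻¹ • (-p' + -p)) := by
  set A := (2 : ℝ)⁻¹ • (q + q') with hA
  set B := (2 : ℝ)⁻¹ • (p + p') with hB
  have hcomm : (2 : ℝ)⁻¹ • (q' + q) = A := by rw [hA, add_comm]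
  have hnegB : (2 : ℝ)⁻¹ • (-p' + -p) = -B := by
    rw [hB]; simp [smul_neg, neg_add, add_comm]
  -- gradq at (A, -B) = gradq at (A, B)
  have hq_eq : gradq A (-B) = gradq A B := by
    rw [hgradq, hgradq]
    congr 1
    funext q''
    exact heven q'' B
  -- gradp at (A, -B) = - gradp at (A, B)
  have hp_eq : gradp A (-B) = - gradp A B := by
    rw [hgradp, hgradp]
    exact gradient_neg_of_even (fun p'' => H (A, p''))
      (hH.comp ((differentiable_const A).prodMk differentiable_id))
      (fun x => heven A x) B
  rw [hcomm, hnegB, hq_eq, hp_eq]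
  constructor
  · rw [h1]; module
  · rw [h2]; module
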